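/- A (d+1)-dimensional symmetric-side channel simulates a d-dimensional erasure channel: there is an isometric encoding V : ℂ^d → ℂ^{(d+1)(d+2)/2} into the input space of Λ_{ss,d+1} such that Λ_{ss,d+1}(V ρ V†) = Λ_{e,d}(ρ) for every density matrix ρ on ℂ^d (up to a fixed isometric identification of output spaces). -/
import Mathlib


open Matrix BigOperators ComplexOrder

/-- A density matrix: positive semidefinite with unit trace. -/
def IsDensityMatrix {n : Type*} [Fintype n] (ρ : Matrix n n ℂ) : Prop :=
  ρ.PosSemidef ∧ ρ.trace = 1

/-- Partial trace over the second tensor factor. -/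
noncomputable def ptraceRight {n m : Type*} [Fintype m]
    (ρ : Matrix (n × m) (n × m) ℂ) : Matrix n n ℂ :=
  fun i j => ∑ k : m, ρ (i, k) (j, k)

/-- Embedding of a d×d matrix into the top-left block of a (d+1)×(d+1) matrix. -/
def embedTL {d : ℕ} (ρ : Matrix (Fin d) (Fin d) ℂ) : Matrix (Fin (d + 1)) (Fin (d + 1)) ℂ :=
  fun i j => if h : i.val < d ∧ j.val < d then ρ ⟨i.val, h.1⟩ ⟨j.val, h.2⟩ else 0

/-- The rank-one projector |e⟩⟨e| onto the erasure flag |e⟩ = |d⟩. -/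
def eFlag (d : ℕ) : Matrix (Fin (d + 1)) (Fin (d + 1)) ℂ :=
  fun i j => if i = Fin.last d ∧ j = Fin.last d then 1 else 0

noncomputable def wv (d : ℕ) (i : Fin d) (p : Fin (d + 1) × Fin (d + 1)) : ℂ :=
  (((Real.sqrt 2)⁻¹ : ℝ) : ℂ) *
    ((if p.1 = i.castSucc ∧ p.2 = Fin.last d then 1 else 0) +
     (if p.1 = Fin.last d ∧ p.2 = i.castSucc then 1 else 0))

lemma wv_symm (d : ℕ) (i : Fin d) (a b : Fin (d+1)) : wv d i (a, b) = wv d i (b, a) := by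
  simp only [wv, and_comm]
  ring

lemma hc2 : (((Real.sqrt 2 : ℝ) : ℂ))⁻¹ * (((Real.sqrt 2 : ℝ) : ℂ))⁻¹ = (2:ℂ)⁻¹ := by
  rw [← mul_inv, ← Complex.ofReal_mul, Real.mul_self_sqrt (by norm_num)]
  norm_num

lemma hc : ((((Real.sqrt 2)⁻¹ : ℝ) : ℂ)) * (((Real.sqrt 2)⁻¹ : ℝ) : ℂ) = (2:ℂ)⁻¹ := by
  rw [← Complex.ofReal_mul, ← mul_inv, Real.mul_self_sqrt (by norm_num)]
  norm_num

lemma sum_k (d : ℕ) (i j : Fin d) (a b : Fin (d + 1)) :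
    ∑ k : Fin (d + 1), wv d i (a, k) * star (wv d j (b, k)) =
      (2 : ℂ)⁻¹ * ((if a = i.castSucc ∧ b = j.castSucc then 1 else 0) +
        (if a = Fin.last d ∧ b = Fin.last d ∧ i = j then 1 else 0)) := by
  have hne : ∀ m : Fin d, Fin.castSucc m ≠ Fin.last d := fun m => (Fin.castSucc_lt_last m).ne
  simp only [wv, star_mul', star_add, Complex.star_def, Complex.conj_ofReal,
    apply_ite (starRingEnd ℂ), _root_.map_one, _root_.map_zero]
  by_cases h1 : a = i.castSucc <;> by_cases h2 : a = Fin.last d <;>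
  by_cases h3 : b = j.castSucc <;> by_cases h4 : b = Fin.last d <;>
  by_cases h5 : i = j <;>
    simp_all [mul_add, add_mul, mul_ite, ite_mul, Finset.mul_sum, hc, hc2, Fin.castSucc_inj, eq_comm,
      mul_comm, mul_assoc, mul_left_comm]

lemma ptrace_eq (d : ℕ) (W : Matrix (Fin (d+1) × Fin (d+1)) (Fin ((d + 1) * (d + 2) / 2)) ℂ)
    (V : Matrix (Fin ((d + 1) * (d + 2) / 2)) (Fin d) ℂ)
    (hW : ∀ p i, (W * V) p i = wv d i p) (ρ : Matrix (Fin d) (Fin d) ℂ) (htr : ρ.trace = 1) :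
    ptraceRight (W * (V * ρ * Vᴴ) * Wᴴ) = (1/2 : ℂ) • embedTL ρ + (1/2:ℂ) • eFlag d := by
  have hprod : W * (V * ρ * Vᴴ) * Wᴴ = (W * V) * ρ * (W * V)ᴴ := by
    rw [conjTranspose_mul]
    simp only [Matrix.mul_assoc]
  rw [hprod]
  ext a b
  show ∑ k, ((W * V) * ρ * (W * V)ᴴ) (a, k) (b, k) = _
  have step1 : ∀ k : Fin (d+1), ((W * V) * ρ * (W * V)ᴴ) (a, k) (b, k) =
      ∑ i, ∑ j, ρ i j * (wv d i (a, k) * star (wv d j (b, k))) := by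
    intro k
    simp only [Matrix.mul_apply, conjTranspose_apply, hW, Finset.sum_mul]
    rw [Finset.sum_comm]
    exact Finset.sum_congr rfl fun i _ => Finset.sum_congr rfl fun j _ => by ring
  rw [Finset.sum_congr rfl fun k _ => step1 k, Finset.sum_comm]
  have step2 : ∀ i : Fin d, ∑ k : Fin (d+1), ∑ j, ρ i j * (wv d i (a, k) * star (wv d j (b, k)))
      = ∑ j, ρ i j * ((2 : ℂ)⁻¹ * ((if a = i.castSucc ∧ b = j.castSucc then 1 else 0) +
        (if a = Fin.last d ∧ b = Fin.last d ∧ i = j then 1 else 0))) := by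
    intro i
    rw [Finset.sum_comm]
    exact Finset.sum_congr rfl fun j _ => by rw [← Finset.mul_sum, sum_k]
  rw [Finset.sum_congr rfl fun i _ => step2 i]
  have hLHS : ∑ i, ∑ j, ρ i j * ((2 : ℂ)⁻¹ *
      ((if a = i.castSucc ∧ b = j.castSucc then 1 else 0) +
        (if a = Fin.last d ∧ b = Fin.last d ∧ i = j then 1 else 0)))
      = (2:ℂ)⁻¹ * (∑ i, ∑ j, ρ i j * (if a = i.castSucc ∧ b = j.castSucc then 1 else 0))
        + (2:ℂ)⁻¹ * (∑ i, ∑ j, ρ i j * (if a = Fin.last d ∧ b = Fin.last d ∧ i = j then 1 else 0)) := by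
    simp only [mul_add, Finset.sum_add_distrib, Finset.mul_sum]
    congr 1 <;> exact Finset.sum_congr rfl fun i _ => Finset.sum_congr rfl fun j _ => by ring
  rw [hLHS]
  have hflag : ∑ i, ∑ j, ρ i j * (if a = Fin.last d ∧ b = Fin.last d ∧ i = j then (1:ℂ) else 0)
      = eFlag d a b := by
    by_cases hab : a = Fin.last d ∧ b = Fin.last d
    · simp only [eFlag, hab, if_pos hab, and_true, true_and, mul_ite, mul_one, mul_zero]
      rw [← htr, Matrix.trace]
      simp [Matrix.diag, Finset.sum_ite_eq]
    · rw [eFlag, if_neg hab]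
      refine Finset.sum_eq_zero fun i _ => Finset.sum_eq_zero fun j _ => ?_
      rw [if_neg (by tauto), mul_zero]
  have htl : ∑ i, ∑ j, ρ i j * (if a = i.castSucc ∧ b = j.castSucc then (1:ℂ) else 0)
      = embedTL ρ a b := by
    by_cases ha : (a : ℕ) < d
    · by_cases hb : (b : ℕ) < d
      · have ha' : a = Fin.castSucc ⟨a.1, ha⟩ := by ext; simp
        have hb' : b = Fin.castSucc ⟨b.1, hb⟩ := by ext; simp
        rw [embedTL, dif_pos ⟨ha, hb⟩]
        rw [Finset.sum_comm]
        rw [Finset.sum_eq_single (⟨b.1, hb⟩ : Fin d)]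
        · rw [Finset.sum_eq_single (⟨a.1, ha⟩ : Fin d)]
          · rw [if_pos ⟨ha', hb'⟩, mul_one]
          · intro i _ hi
            rw [if_neg, mul_zero]
            rintro ⟨h1, -⟩
            exact hi (by rw [ha'] at h1; exact (Fin.castSucc_inj.mp h1).symm)
          · intro h; exact absurd (Finset.mem_univ _) h
        · intro j _ hj
          refine Finset.sum_eq_zero fun i _ => ?_
          rw [if_neg, mul_zero]
          rintro ⟨-, h2⟩
          exact hj (by rw [hb'] at h2; exact (Fin.castSucc_inj.mp h2).symm)
        · intro h; exact absurd (Finset.mem_univ _) h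
      · rw [embedTL, dif_neg (by tauto)]
        refine Finset.sum_eq_zero fun i _ => Finset.sum_eq_zero fun j _ => ?_
        rw [if_neg, mul_zero]
        rintro ⟨-, h2⟩
        exact hb (by rw [h2]; simpa using j.isLt)
    · rw [embedTL, dif_neg (by tauto)]
      refine Finset.sum_eq_zero fun i _ => Finset.sum_eq_zero fun j _ => ?_
      rw [if_neg, mul_zero]
      rintro ⟨h1, -⟩
      exact ha (by rw [h1]; simpa using i.isLt)
  rw [hflag, htl]
  simp only [Matrix.add_apply, Matrix.smul_apply, smul_eq_mul]
  ring

/-- A (d+1)-dimensional symmetric-side channel simulates a d-dimensional erasure channel: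
    if U is an isometry of ℂ^{(d+1)(d+2)/2} onto the symmetric subspace of
    ℂ^{d+1} ⊗ ℂ^{d+1}, there is an isometric encoding V : ℂ^d → ℂ^{(d+1)(d+2)/2} with
    Λ_{ss,d+1}(VρV†) = (1/2)ρ + (1/2)|e⟩⟨e| for every density matrix ρ on ℂ^d. -/
theorem ss_channel_simulates_erasure_channel (d : ℕ)
    (U : Matrix (Fin (d + 1) × Fin (d + 1)) (Fin ((d + 1) * (d + 2) / 2)) ℂ)
    (hIso : Uᴴ * U = 1)
    (hRangeSym : ∀ v : Fin ((d + 1) * (d + 2) / 2) → ℂ, ∀ i j : Fin (d + 1),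
      U.mulVec v (i, j) = U.mulVec v (j, i))
    (hOnto : ∀ w : Fin (d + 1) × Fin (d + 1) → ℂ,
      (∀ i j : Fin (d + 1), w (i, j) = w (j, i)) → ∃ v, U.mulVec v = w) :
    ∃ V : Matrix (Fin ((d + 1) * (d + 2) / 2)) (Fin d) ℂ,
      Vᴴ * V = 1 ∧
      ∀ ρ : Matrix (Fin d) (Fin d) ℂ, IsDensityMatrix ρ →
        ptraceRight (U * (V * ρ * Vᴴ) * Uᴴ)
          = (1 / 2 : ℂ) • embedTL ρ + (1 / 2 : ℂ) • eFlag d := by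
  choose v hv using fun i : Fin d => hOnto (wv d i) (fun a b => wv_symm d i a b)
  set V : Matrix (Fin ((d + 1) * (d + 2) / 2)) (Fin d) ℂ := Matrix.of fun k i => v i k with hV
  have hUV : ∀ (p : Fin (d+1) × Fin (d+1)) (i : Fin d), (U * V) p i = wv d i p := by
    intro p i
    have := congrFun (hv i) p
    simpa [Matrix.mul_apply, Matrix.mulVec, dotProduct, hV] using this
  have key : Vᴴ * V = (U * V)ᴴ * (U * V) := by
    rw [conjTranspose_mul, Matrix.mul_assoc, ← Matrix.mul_assoc Uᴴ U, hIso, Matrix.one_mul]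
  refine ⟨V, ?_, ?_⟩
  · ext i j
    rw [key, Matrix.mul_apply]
    simp only [conjTranspose_apply, hUV]
    rw [Fintype.sum_prod_type]
    have inner : ∀ a : Fin (d+1), ∑ b, star (wv d i (a, b)) * wv d j (a, b) =
        (2:ℂ)⁻¹ * ((if a = i.castSucc ∧ a = j.castSucc then 1 else 0) +
          (if a = Fin.last d ∧ a = Fin.last d ∧ i = j then 1 else 0)) := by
      intro a
      have h := sum_k d i j a a
      calc ∑ b, star (wv d i (a, b)) * wv d j (a, b)
          = star (∑ b, wv d i (a, b) * star (wv d j (a, b))) := by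
            rw [star_sum]
            exact Finset.sum_congr rfl fun b _ => by rw [star_mul', star_star, mul_comm]
        _ = star ((2:ℂ)⁻¹ * ((if a = i.castSucc ∧ a = j.castSucc then 1 else 0) +
              (if a = Fin.last d ∧ a = Fin.last d ∧ i = j then 1 else 0))) := by rw [h]
        _ = _ := by
            simp [apply_ite (starRingEnd ℂ), ← Complex.ofReal_inv]
    rw [Finset.sum_congr rfl fun a _ => inner a]
    by_cases h5 : i = j <;>
      simp [h5, Matrix.one_apply, mul_add, Finset.sum_add_distrib, Fin.castSucc_inj,
        Finset.mul_sum, and_self, ← and_assoc]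
    · norm_num
    · exact Finset.sum_eq_zero fun x _ =>
        if_neg (by rintro ⟨h1, h2⟩; exact h5 (Fin.castSucc_inj.mp (h1.symm.trans h2)))
  · intro ρ hρ
    exact ptrace_eq d U V hUV ρ hρ.2
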